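/- For all integers m and n, setting x = 4(n^2-2m^2)(n^2+2mn+2m^2)(n^2+4mn+2m^2), y = 3(n^2-2m^2)(n^2+2mn+2m^2)(n^2+4mn+2m^2), z = 16mn(n+m)(n+2m)(n^2+2mn+2m^2), a = 5(n^2-2m^2)(n^2+2mn+2m^2)(n^2+4mn+2m^2), b = 4(n^2+2mn+2m^2)^3, c1 = (n^2+4mn+2m^2)(n^2+4mn+6m^2)(3n^2+4mn+2m^2), c2 = (n^2-2m^2)(n^2+2m^2)(3n^2+8mn+6m^2), d1 = (n^2+4mn+2m^2)(5n^4+16mn^3+28m^2n^2+32m^3n+20m^4), d2 = (n^2-2m^2)(5n^4+24mn^3+52m^2n^2+48m^3n+20m^4), all seven equations hold: x^2+y^2=a^2, x^2+z^2=b^2, x^2+c1^2=d1^2, x^2+c2^2=d2^2, 2y^2+2z^2=c1^2+c2^2, 2y^2+2b^2=d1^2+d2^2, and 2a^2+2z^2=d1^2+d2^2. -/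
import Mathlib


theorem stmt_7 (m n x y z a b c1 c2 d1 d2 : ℤ)
    (hx : x = 4*(n^2-2*m^2)*(n^2+2*m*n+2*m^2)*(n^2+4*m*n+2*m^2))
    (hy : y = 3*(n^2-2*m^2)*(n^2+2*m*n+2*m^2)*(n^2+4*m*n+2*m^2))
    (hz : z = 16*m*n*(n+m)*(n+2*m)*(n^2+2*m*n+2*m^2))
    (ha : a = 5*(n^2-2*m^2)*(n^2+2*m*n+2*m^2)*(n^2+4*m*n+2*m^2))
    (hb : b = 4*(n^2+2*m*n+2*m^2)^3)
    (hc1 : c1 = (n^2+4*m*n+2*m^2)*(n^2+4*m*n+6*m^2)*(3*n^2+4*m*n+2*m^2))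
    (hc2 : c2 = (n^2-2*m^2)*(n^2+2*m^2)*(3*n^2+8*m*n+6*m^2))
    (hd1 : d1 = (n^2+4*m*n+2*m^2)*(5*n^4+16*m*n^3+28*m^2*n^2+32*m^3*n+20*m^4))
    (hd2 : d2 = (n^2-2*m^2)*(5*n^4+24*m*n^3+52*m^2*n^2+48*m^3*n+20*m^4)) :
    x^2 + y^2 = a^2 ∧ x^2 + z^2 = b^2 ∧ x^2 + c1^2 = d1^2 ∧ x^2 + c2^2 = d2^2 ∧ 2*y^2 + 2*z^2 = c1^2 + c2^2 ∧ 2*y^2 + 2*b^2 = d1^2 + d2^2 ∧ 2*a^2 + 2*z^2 = d1^2 + d2^2 := by subst hx hy hz ha hb hc1 hc2 hd1 hd2; refine ⟨by ring, by ring, by ring, by ring, by ring, by ring, by ring⟩
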